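/- arXiv:1402.4213 — 2 statements merged into one kernel-verified Lean document; each statement's English description precedes it below -/
import Mathlib

section
/- Let X_m be the Kronecker quantum cluster variables (X_{m-1}X_{m+1} = qX_m² + 1 in the skew field of T with X₁X₂ = qX₂X₁). Then consecutive cluster variables quasi-commute: X_m X_{m+1} = q X_{m+1} X_m for all m ∈ ℤ. -/
private lemma kqcc_step_up {F : Type*} [DivisionRing F] (a u v w : F)
    (hu : u ≠ 0) (hc : ∀ x : F, a * x = x * a)
    (h1 : u * v = a * (v * u)) (h2 : u * w = a * v ^ 2 + 1) :
    v * w = a * (w * v) := by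
  apply mul_left_cancel₀ hu
  have hvc : v * (a * v ^ 2 + 1) = (a * v ^ 2 + 1) * v := by
    simp only [mul_add, add_mul, mul_one, one_mul, sq, ← mul_assoc, ← hc v]
  calc u * (v * w) = (u * v) * w := by rw [mul_assoc]
    _ = a * (v * (u * w)) := by rw [h1]; simp only [mul_assoc]
    _ = a * (v * (a * v ^ 2 + 1)) := by rw [h2]
    _ = a * ((a * v ^ 2 + 1) * v) := by rw [hvc]
    _ = a * ((u * w) * v) := by rw [h2]
    _ = u * (a * (w * v)) := by simp only [← mul_assoc]; rw [← hc u]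

private lemma kqcc_step_down {F : Type*} [DivisionRing F] (a u v w : F)
    (hw : w ≠ 0) (hc : ∀ x : F, a * x = x * a)
    (h1 : v * w = a * (w * v)) (h2 : u * w = a * v ^ 2 + 1) :
    u * v = a * (v * u) := by
  apply mul_right_cancel₀ hw
  have hvc : v * (a * v ^ 2 + 1) = (a * v ^ 2 + 1) * v := by
    simp only [mul_add, add_mul, mul_one, one_mul, sq, ← mul_assoc, ← hc v]
  calc (u * v) * w = u * (v * w) := by rw [mul_assoc]
    _ = a * ((u * w) * v) := by rw [h1]; simp only [← mul_assoc]; rw [← hc u]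
    _ = a * ((a * v ^ 2 + 1) * v) := by rw [h2]
    _ = a * (v * (a * v ^ 2 + 1)) := by rw [hvc]
    _ = a * (v * (u * w)) := by rw [h2]
    _ = (a * (v * u)) * w := by simp only [mul_assoc]

/-- Let `X_m` be the Kronecker quantum cluster variables
(`X_{m-1}X_{m+1} = qX_m² + 1` in the skew field of the quantum torus with
`X₁X₂ = qX₂X₁`). Then consecutive cluster variables quasi-commute:
`X_m X_{m+1} = q X_{m+1} X_m` for all `m ∈ ℤ`. -/
theorem kronecker_consecutive_quasi_commute
    {K : Type*} [Field K] {F : Type*} [DivisionRing F] [Algebra K F]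
    (q : K) (hq : q ≠ 0)
    (X : ℤ → F) (hne : ∀ m : ℤ, X m ≠ 0)
    (hrel : X 1 * X 2 = q • (X 2 * X 1))
    (hrec : ∀ m : ℤ, X (m - 1) * X (m + 1) = q • (X m) ^ 2 + 1) :
    ∀ m : ℤ, X m * X (m + 1) = q • (X (m + 1) * X m) := by
  set a : F := algebraMap K F q with ha
  have hsmul : ∀ x : F, q • x = a * x := fun x => Algebra.smul_def q x
  have hc : ∀ x : F, a * x = x * a := fun x => Algebra.commutes q x
  have key : ∀ n : ℤ, X n * X (n + 1) = a * (X (n + 1) * X n) := by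
    have base : X 1 * X 2 = a * (X 2 * X 1) := by rw [← hsmul]; exact hrel
    have up : ∀ m : ℤ, X m * X (m + 1) = a * (X (m + 1) * X m) →
        X (m + 1) * X (m + 1 + 1) = a * (X (m + 1 + 1) * X (m + 1)) := by
      intro m h
      refine kqcc_step_up a (X m) (X (m + 1)) (X (m + 1 + 1)) (hne m) hc h ?_
      have := hrec (m + 1)
      rw [hsmul] at this
      simpa using this
    have down : ∀ m : ℤ, X m * X (m + 1) = a * (X (m + 1) * X m) →
        X (m - 1) * X (m - 1 + 1) = a * (X (m - 1 + 1) * X (m - 1)) := by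
      intro m h
      have hrec' := hrec m
      rw [hsmul] at hrec'
      have := kqcc_step_down a (X (m - 1)) (X m) (X (m + 1)) (hne (m + 1)) hc h hrec'
      simpa using this
    intro n
    have shift : ∀ k : ℤ, X (1 + k) * X (1 + k + 1) = a * (X (1 + k + 1) * X (1 + k)) := by
      intro k
      induction k using Int.induction_on with
      | zero => simpa using base
      | succ i ih =>
          have := up (1 + i) ih
          convert this using 3 <;> ring
      | pred i ih =>
          have := down (1 + -i) ih
          convert this using 3 <;> ring
    have := shift (n - 1)
    simpa using this
  intro m
  rw [hsmul]
  exact key m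
end

section
/- Let B̃ be an m×n integer matrix and Λ a skew-symmetric m×m integer matrix with Λ(−B̃) = [I_n; 0] (compatibility with D = I_n). If B̃' is the matrix mutation of B̃ in direction k (b'_{ij} = −b_{ij} if i = k or j = k, else b'_{ij} = b_{ij} + sgn(b_{ik})[b_{ik}b_{kj}]_+) and Λ' = EᵀΛE with E the mutation involution matrix, then Λ'(−B̃') = [I_n; 0], i.e., compatibility is preserved under mutation. -/
open Matrix

lemma colmul {m n : ℕ} (v : Fin m → ℤ) (κ : Fin m) (M : Matrix (Fin m) (Fin n) ℤ) :
    (Matrix.of fun i l => if l = κ then v i else 0) * M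
      = Matrix.of fun i j => v i * M κ j := by
  ext i j
  simp [Matrix.mul_apply, ite_mul, Finset.sum_ite_eq']

lemma mulrow {m n : ℕ} (w : Fin n → ℤ) (p₀ : Fin n) (M : Matrix (Fin m) (Fin n) ℤ) :
    M * (Matrix.of fun p j => if p = p₀ then w j else 0)
      = Matrix.of fun i j => M i p₀ * w j := by
  ext i j
  simp [Matrix.mul_apply, mul_ite, Finset.sum_ite_eq']

lemma aux_sign (x y : ℤ) : x * max 0 y + max 0 (-x) * y = x.sign * max 0 (x*y) := by
  rcases lt_trichotomy x 0 with hx|hx|hx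
  · rw [Int.sign_eq_neg_one_of_neg hx, max_eq_right (by linarith : (0:ℤ) ≤ -x)]
    rcases le_or_gt y 0 with hy|hy
    · rw [max_eq_right (by nlinarith : (0:ℤ) ≤ x*y), max_eq_left hy]
      ring
    · rw [max_eq_left (by nlinarith : x*y ≤ 0), max_eq_right hy.le]
      ring
  · simp [hx]
  · rw [Int.sign_eq_one_of_pos hx, max_eq_left (by linarith : -x ≤ 0), one_mul]
    rcases le_or_gt y 0 with hy|hy
    · rw [max_eq_left (by nlinarith : x*y ≤ 0), max_eq_left hy]
      ring
    · rw [max_eq_right (by nlinarith : (0:ℤ) ≤ x*y), max_eq_right hy.le]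
      ring

/-- Let `B̃` be an `m×n` integer matrix with skew-symmetric principal part and
`Lam` a skew-symmetric `m×m` integer matrix with `Lam(−B̃) = [I_n; 0]`
(compatibility with `D = I_n`). If `B̃'` is the matrix mutation of `B̃` in
direction `k` (`b'_{ij} = −b_{ij}` if `i = k` or `j = k`, otherwise
`b'_{ij} = b_{ij} + sgn(b_{ik}) [b_{ik} b_{kj}]_+`) and `Lam' = Eᵀ Lam E` with `E`
the mutation involution matrix, then `Lam'(−B̃') = [I_n; 0]`: compatibility is
preserved under mutation. -/
theorem mutation_preserves_compatibility
    {m n : ℕ} (hmn : n ≤ m)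
    (b : Matrix (Fin m) (Fin n) ℤ) (Lam : Matrix (Fin m) (Fin m) ℤ)
    (k : Fin n)
    (hskewB : ∀ i j : Fin n, b (Fin.castLE hmn i) j = - b (Fin.castLE hmn j) i)
    (hskewLam : Lamᵀ = -Lam)
    (hcompat : Lam * (-b)
      = Matrix.of fun (i : Fin m) (j : Fin n) => if (i : ℕ) = (j : ℕ) then 1 else 0)
    (E : Matrix (Fin m) (Fin m) ℤ)
    (hE : E = Matrix.of fun i j =>
      if j ≠ Fin.castLE hmn k then (if i = j then 1 else 0)
      else if i = Fin.castLE hmn k then -1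
      else max 0 (-(b i k)))
    (b' : Matrix (Fin m) (Fin n) ℤ)
    (hb' : b' = Matrix.of fun i j =>
      if i = Fin.castLE hmn k ∨ j = k then -(b i j)
      else b i j + (b i k).sign * max 0 (b i k * b (Fin.castLE hmn k) j))
    (Lam' : Matrix (Fin m) (Fin m) ℤ)
    (hLam' : Lam' = Eᵀ * Lam * E) :
    Lam' * (-b')
      = Matrix.of fun (i : Fin m) (j : Fin n) => if (i : ℕ) = (j : ℕ) then 1 else 0 := by
  set κ : Fin m := Fin.castLE hmn k with hκ
  have hb0 : b κ k = 0 := by have := hskewB k k; linarith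
  -- the rank-one correction matrices
  set A : Matrix (Fin m) (Fin m) ℤ :=
    Matrix.of (fun i l => if l = κ then (if i = κ then -2 else max 0 (-(b i k))) else 0)
    with hA
  set G : Matrix (Fin n) (Fin n) ℤ :=
    Matrix.of (fun p j => if p = k then (if j = k then -2 else max 0 (b κ j)) else 0)
    with hG
  have hEA : E = 1 + A := by
    rw [hE, hA]
    ext i l
    by_cases hl : l = κ <;> by_cases hi : i = κ <;>
      simp [Matrix.one_apply, hl, hi]
  have hAA : A * A = (-2 : ℤ) • A := by
    rw [hA, colmul]
    ext i j
    by_cases hj : j = κ <;> by_cases hi : i = κ <;>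
      simp [hj, hi] <;> ring
  have hE2 : E * E = 1 := by
    have h : (1 + A) * (1 + A) = 1 + A + A + A * A := by noncomm_ring
    rw [hEA, h, hAA]
    abel
  -- factorization b' = E * (b * (1 + G))
  have hbF : b * (1 + G) = Matrix.of fun i j =>
      b i j + b i k * (if j = k then -2 else max 0 (b κ j)) := by
    rw [Matrix.mul_add, Matrix.mul_one, hG, mulrow]
    ext i j
    simp
  have hfact : E * (b * (1 + G)) = b' := by
    rw [hbF, hEA, Matrix.add_mul, Matrix.one_mul, hA, colmul, hb']
    ext i j
    simp only [Matrix.add_apply, Matrix.of_apply]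
    by_cases hi : i = κ <;> by_cases hj : j = k
    · subst hi; subst hj; simp [hb0]
    · subst hi; simp [hj, hb0]; ring
    · subst hj; simp [hi, hb0]; ring
    · have hik : ¬ (i = κ ∨ j = k) := by tauto
      rw [if_neg hik, if_neg hi, if_neg hj, hb0, zero_mul, add_zero]
      have := aux_sign (b i k) (b κ j)
      linarith
  -- the key computation  Eᵀ * C * (1+G) = C
  have hETC : Eᵀ * (Matrix.of fun (i : Fin m) (j : Fin n) =>
        if (i : ℕ) = (j : ℕ) then (1:ℤ) else 0)
      = Matrix.of fun i j => E (Fin.castLE hmn j) i := by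
    ext i j
    rw [Matrix.mul_apply]
    rw [Finset.sum_eq_single (Fin.castLE hmn j)]
    · simp
    · intro l _ hl
      simp only [Matrix.transpose_apply, Matrix.of_apply]
      rw [if_neg, mul_zero]
      intro h
      exact hl (Fin.ext h)
    · intro h; exact absurd (Finset.mem_univ _) h
  have hkey : Eᵀ * ((Matrix.of fun (i : Fin m) (j : Fin n) =>
        if (i : ℕ) = (j : ℕ) then (1:ℤ) else 0) * (1 + G))
      = Matrix.of fun (i : Fin m) (j : Fin n) => if (i : ℕ) = (j : ℕ) then (1:ℤ) else 0 := by
    rw [← Matrix.mul_assoc, hETC, Matrix.mul_add, Matrix.mul_one, hG, mulrow]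
    have hcast : ∀ j' : Fin n, (Fin.castLE hmn j' : Fin m) = κ ↔ j' = k := by
      intro j'
      rw [hκ]
      exact ⟨fun h => Fin.castLE_injective hmn h, fun h => by rw [h]⟩
    have hEκκ : E κ κ = -1 := by rw [hE]; simp
    have hEκrow : ∀ i : Fin m, i ≠ κ → E κ i = 0 := by
      intro i hi
      rw [hE]
      simp [hi, Ne.symm hi]
    ext i j
    simp only [Matrix.add_apply, Matrix.of_apply]
    rw [← hκ]
    by_cases hj : j = k
    · rw [if_pos hj, (by rw [(hcast j).mpr hj] : E (Fin.castLE hmn j) i = E κ i)]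
      by_cases hi : i = κ
      · rw [hi, hEκκ]
        have hv : (κ : ℕ) = (j : ℕ) := by rw [hκ, hj]; simp
        rw [if_pos hv]; ring
      · rw [hEκrow i hi]
        have hv : ¬ (i : ℕ) = (j : ℕ) := by
          intro h
          apply hi
          rw [hκ]
          exact Fin.ext (by rw [hj] at h; simpa using h)
        rw [if_neg hv]; ring
    · rw [if_neg hj]
      have h1 : Fin.castLE hmn j ≠ κ := fun h => hj ((hcast j).mp h)
      by_cases hi : i = κ
      · have h2 : E (Fin.castLE hmn j) κ = max 0 (-(b (Fin.castLE hmn j) k)) := by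
          rw [hE]
          simp [h1]
        rw [hi, h2, hEκκ]
        have hsk := hskewB j k
        rw [← hκ] at hsk
        rw [hsk, neg_neg]
        have hnj : ¬ (κ : ℕ) = (j : ℕ) := by
          intro h
          apply hj
          rw [hκ] at h
          exact Fin.ext (by simpa using h.symm)
        rw [if_neg hnj]; ring
      · have h2 : E (Fin.castLE hmn j) i = if Fin.castLE hmn j = i then 1 else 0 := by
          rw [hE]
          simp [hi]
        rw [h2, hEκrow i hi, zero_mul, add_zero]
        have h3 : (Fin.castLE hmn j = i) ↔ ((i : ℕ) = (j : ℕ)) := by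
          constructor
          · intro h; rw [← h]; simp
          · intro h; exact Fin.ext (by simpa using h.symm)
        by_cases h4 : (i : ℕ) = (j : ℕ)
        · rw [if_pos (h3.mpr h4), if_pos h4]
        · rw [if_neg (fun h => h4 (h3.mp h)), if_neg h4]
  -- assemble
  rw [hLam', ← hfact, ← Matrix.mul_neg, Matrix.mul_assoc (Eᵀ * Lam) E _,
    ← Matrix.mul_assoc E E _, hE2, Matrix.one_mul, ← Matrix.neg_mul,
    Matrix.mul_assoc Eᵀ Lam _, ← Matrix.mul_assoc Lam (-b) (1 + G), hcompat]
  exact hkey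
end
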